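/- arXiv:0909.3367 — 2 statements merged into one kernel-verified Lean document; each statement's English description precedes it below -/
import Mathlib

section
/- (Case 7: singular lines of Q_{(1:0)}) For all b, c ∈ ℂ, the point η := (0,0,0,0,0,0,0,b,c,−b−c) ∈ ℂ^{10} satisfies S_1(η) = 0 and there exists μ ∈ ℂ with (∂S_5/∂x_i)(η) = μ for all i = 0,…,9, where S_5 is the 5th elementary symmetric polynomial in x_0,…,x_9. In particular, the hyperquintic Q_{(1:0)} = {S_5 = 0} in ℙ^8(ℂ) contains 120 singular lines of this form. -/
open MvPolynomial Finset

lemma pderiv_prod_X (i : Fin 10) (t : Finset (Fin 10)) :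
    pderiv i (∏ j ∈ t, (X j : MvPolynomial (Fin 10) ℂ)) =
      if i ∈ t then ∏ j ∈ t.erase i, X j else 0 := by
  induction t using Finset.induction_on with
  | empty => simp
  | @insert a t ha ih =>
    rw [Finset.prod_insert ha, pderiv_mul, ih]
    by_cases hia : i = a
    · subst hia
      simp [ha, Finset.erase_insert ha]
    · rw [pderiv_X_of_ne (fun h => hia h.symm), zero_mul, zero_add]
      by_cases hit : i ∈ t
      · rw [if_pos hit, if_pos (Finset.mem_insert_of_mem hit),
          Finset.erase_insert_of_ne (fun h => hia h.symm),
          Finset.prod_insert (fun h => ha (Finset.mem_of_mem_erase h))]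
      · simp [hit, hia, Finset.mem_insert]

/-- **Case 7, singular lines of `Q_{(1:0)}`.** For all `b, c ∈ ℂ`, the point
`η = (0,0,0,0,0,0,0,b,c,−b−c)` satisfies `S₁(η) = 0` and is a singular point of the
hyperquintic `Q_{(1:0)} = {S₅ = 0}` in `ℙ⁸(ℂ)`; these points form 120 singular lines. -/
theorem case7_singular_lines (b c : ℂ) (η : Fin 10 → ℂ)
    (hη : η = ![0, 0, 0, 0, 0, 0, 0, b, c, -b - c]) :
    eval η (esymm (Fin 10) ℂ 1) = 0 ∧
    ∃ μ : ℂ, ∀ i, eval η (pderiv i (esymm (Fin 10) ℂ 5)) = μ := by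
  constructor
  · rw [esymm_one, map_sum]
    subst hη
    simp [Fin.sum_univ_succ]
  · refine ⟨0, fun i => ?_⟩
    rw [esymm, map_sum, map_sum]
    refine Finset.sum_eq_zero fun t ht => ?_
    rw [pderiv_prod_X]
    by_cases hit : i ∈ t
    · rw [if_pos hit, map_prod]
      have hcard : (t.erase i).card = 4 := by
        rw [Finset.card_erase_of_mem hit, (Finset.mem_powersetCard.mp ht).2]
      have hns : ¬ t.erase i ⊆ ({7, 8, 9} : Finset (Fin 10)) := by
        intro hsub
        have := Finset.card_le_card hsub
        simp [hcard] at this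
      obtain ⟨j, hj, hj3⟩ := Finset.not_subset.mp hns
      refine Finset.prod_eq_zero hj ?_
      simp only [Finset.mem_insert, Finset.mem_singleton, not_or] at hj3
      obtain ⟨h7, h8, h9⟩ := hj3
      subst hη
      fin_cases j <;> simp_all <;> rfl
    · rw [if_neg hit, map_zero]
end

section
/- (Case 21: singular lines of Q_{(2:−1)}) For all b, c ∈ ℂ, the point η := (0,0,0,0,b,b,c,c,−b−c,−b−c) ∈ ℂ^{10} satisfies S_1(η) = 0 and there exists μ ∈ ℂ with (∂F_{2,−1}/∂x_i)(η) = μ for all i = 0,…,9; that is, the hyperquintic Q_{(2:−1)} = {2·S_5 − S_2·S_3 = 0} in ℙ^8(ℂ) is singular along all such points. -/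
open MvPolynomial

section Aux

variable {σ : Type*} [Fintype σ] [DecidableEq σ] {R : Type*} [CommRing R]

/-- Sum of squarefree monomials of degree `m` in the variables other than `i`. -/
noncomputable def auxP (i : σ) (m : ℕ) : MvPolynomial σ R :=
  ∑ s ∈ (Finset.univ.erase i).powersetCard m, ∏ j ∈ s, X j

lemma esymm_split (i : σ) (m : ℕ) :
    esymm σ R (m+1) = auxP i (m+1) + X i * auxP (R := R) i m := by
  have hi : i ∉ Finset.univ.erase i := Finset.notMem_erase i _
  have huniv : (Finset.univ : Finset σ) = insert i (Finset.univ.erase i) :=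
    (Finset.insert_erase (Finset.mem_univ i)).symm
  rw [esymm, huniv, Finset.powersetCard_succ_insert hi]
  rw [Finset.sum_union ?disj]
  case disj =>
    rw [Finset.disjoint_left]
    intro t ht ht'
    obtain ⟨s, hs, rfl⟩ := Finset.mem_image.mp ht'
    exact hi ((Finset.mem_powersetCard.mp ht).1 (Finset.mem_insert_self i s))
  congr 1
  rw [Finset.sum_image ?inj, auxP, Finset.mul_sum]
  case inj =>
    intro s hs t ht h
    have hs' : i ∉ s := fun h' => hi ((Finset.mem_powersetCard.mp hs).1 h')
    have ht' : i ∉ t := fun h' => hi ((Finset.mem_powersetCard.mp ht).1 h')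
    rw [← Finset.erase_insert hs', h, Finset.erase_insert ht']
  refine Finset.sum_congr rfl fun s hs => ?_
  have : i ∉ s := fun h => hi ((Finset.mem_powersetCard.mp hs).1 h)
  rw [Finset.prod_insert this]

omit [Fintype σ] in
lemma pderiv_prod_X_s11 (i : σ) {s : Finset σ} (h : i ∉ s) :
    pderiv i (∏ j ∈ s, (X j : MvPolynomial σ R)) = 0 := by
  induction s using Finset.induction_on with
  | empty => simp
  | @insert a s ha ih =>
    rw [Finset.prod_insert ha, pderiv_mul,
      pderiv_X_of_ne (fun hh => h (by rw [← hh]; exact Finset.mem_insert_self a s)),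
      ih (fun hh => h (Finset.mem_insert_of_mem hh))]
    simp

lemma pderiv_auxP (i : σ) (m : ℕ) : pderiv i (auxP (R := R) i m) = 0 := by
  rw [auxP, map_sum]
  exact Finset.sum_eq_zero fun s hs => pderiv_prod_X_s11 i
    (fun h => Finset.notMem_erase i _ ((Finset.mem_powersetCard.mp hs).1 h))

lemma pderiv_esymm' (i : σ) (m : ℕ) :
    pderiv i (esymm σ R (m+1)) = auxP i m := by
  rw [esymm_split i m, map_add, pderiv_auxP, pderiv_mul, pderiv_auxP, pderiv_X_self]
  simp

lemma auxP_zero (i : σ) : auxP (R := R) i 0 = 1 := by simp [auxP]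

end Aux

lemma Multiset.esymm_cons' {R : Type*} [CommRing R] (a : R) (s : Multiset R) (n : ℕ) :
    (a ::ₘ s).esymm (n+1) = s.esymm (n+1) + a * s.esymm n := by
  rw [Multiset.esymm, Multiset.powersetCard_cons, Multiset.map_add, Multiset.sum_add,
    Multiset.map_map, Multiset.esymm, Multiset.esymm, ← Multiset.sum_map_mul_left]
  congr 2
  exact Multiset.map_congr rfl fun t _ => by simp [Multiset.prod_cons]

lemma Multiset.esymm_zero' {R : Type*} [CommRing R] (s : Multiset R) : s.esymm 0 = 1 := by
  simp [Multiset.esymm]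

lemma Multiset.esymm_nil' {R : Type*} [CommRing R] (n : ℕ) :
    (0 : Multiset R).esymm (n+1) = 0 := by
  simp [Multiset.esymm, Multiset.powersetCard_zero_right]

lemma eval_esymm_eq_multiset {n : ℕ} (η : Fin n → ℂ) (k : ℕ) :
    eval η (esymm (Fin n) ℂ k) = (Finset.univ.val.map η).esymm k := by
  rw [← aeval_esymm_eq_multiset_esymm (R := ℂ) (n := k) (f := η)]
  rfl

/-- **Case 21, singular lines of `Q_{(2:−1)}`.** For all `b, c ∈ ℂ`, the point
`η = (0,0,0,0,b,b,c,c,−b−c,−b−c)` satisfies `S₁(η) = 0` and is a singular point of the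
hyperquintic `Q_{(2:−1)} = {2·S₅ − S₂·S₃ = 0}` in `ℙ⁸(ℂ)`. -/
theorem case21_singular_lines (b c : ℂ) (η : Fin 10 → ℂ)
    (hη : η = ![0, 0, 0, 0, b, b, c, c, -b - c, -b - c]) :
    eval η (esymm (Fin 10) ℂ 1) = 0 ∧
    ∃ μ : ℂ, ∀ i, eval η (pderiv i
      (C (2 : ℂ) * esymm (Fin 10) ℂ 5
        + C (-1 : ℂ) * (esymm (Fin 10) ℂ 2 * esymm (Fin 10) ℂ 3))) = μ := by
  subst hη
  set η : Fin 10 → ℂ := ![0, 0, 0, 0, b, b, c, c, -b - c, -b - c] with hηdef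
  have hlist : (Finset.univ.val.map η) = ↑[(0:ℂ),0,0,0,b,b,c,c,-b-c,-b-c] := rfl
  have hesymm : ∀ k, eval η (esymm (Fin 10) ℂ k)
      = (([(0:ℂ),0,0,0,b,b,c,c,-b-c,-b-c] : Multiset ℂ)).esymm k := by
    intro k; rw [eval_esymm_eq_multiset, hlist]
  have hE1 : eval η (esymm (Fin 10) ℂ 1) = 0 := by
    rw [hesymm]
    simp only [← Multiset.cons_coe, Multiset.coe_nil, Multiset.esymm_cons',
      Multiset.esymm_zero', Multiset.esymm_nil']
    ring
  have hE2 : eval η (esymm (Fin 10) ℂ 2) = -2*(b^2+b*c+c^2) := by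
    rw [hesymm]
    simp only [← Multiset.cons_coe, Multiset.coe_nil, Multiset.esymm_cons',
      Multiset.esymm_zero', Multiset.esymm_nil']
    ring
  have hE3 : eval η (esymm (Fin 10) ℂ 3) = -2*(b^2*c+b*c^2) := by
    rw [hesymm]
    simp only [← Multiset.cons_coe, Multiset.coe_nil, Multiset.esymm_cons',
      Multiset.esymm_zero', Multiset.esymm_nil']
    ring
  refine ⟨hE1, 2 * eval η (esymm (Fin 10) ℂ 4) - (-2*(b^2+b*c+c^2))^2, fun i => ?_⟩
  have hx : η i = 0 ∨ η i = b ∨ η i = c ∨ η i = -b-c := by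
    fin_cases i
    · exact .inl rfl
    · exact .inl rfl
    · exact .inl rfl
    · exact .inl rfl
    · exact .inr (.inl rfl)
    · exact .inr (.inl rfl)
    · exact .inr (.inr (.inl rfl))
    · exact .inr (.inr (.inl rfl))
    · exact .inr (.inr (.inr rfl))
    · exact .inr (.inr (.inr rfl))
  have hrec : ∀ m, eval η (esymm (Fin 10) ℂ (m+1))
      = eval η (auxP i (m+1)) + η i * eval η (auxP (R := ℂ) i m) := by
    intro m
    rw [esymm_split i m]
    simp
  have hD0 : eval η (auxP (R := ℂ) i 0) = 1 := by rw [auxP_zero]; simp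
  have hD1 : eval η (auxP (R := ℂ) i 1) = -(η i) := by
    have h := hrec 0
    rw [hE1, hD0] at h
    linear_combination -h
  have hD2 : eval η (auxP (R := ℂ) i 2) = -2*(b^2+b*c+c^2) + (η i)^2 := by
    have h := hrec 1
    rw [show (1:ℕ)+1 = 2 from rfl, hE2, hD1] at h
    linear_combination -h
  have hD3 : eval η (auxP (R := ℂ) i 3)
      = -2*(b^2*c+b*c^2) - η i * (-2*(b^2+b*c+c^2)) - (η i)^3 := by
    have h := hrec 2
    rw [show (2:ℕ)+1 = 3 from rfl, hE3, hD2] at h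
    linear_combination -h
  have hD4 : eval η (auxP (R := ℂ) i 4)
      = eval η (esymm (Fin 10) ℂ 4)
        - η i * (-2*(b^2*c+b*c^2) - η i * (-2*(b^2+b*c+c^2)) - (η i)^3) := by
    have h := hrec 3
    rw [show (3:ℕ)+1 = 4 from rfl, hD3] at h
    linear_combination -h
  have h5 : pderiv i (esymm (Fin 10) ℂ 5) = auxP i 4 := pderiv_esymm' i 4
  have h2 : pderiv i (esymm (Fin 10) ℂ 2) = auxP i 1 := pderiv_esymm' i 1
  have h3 : pderiv i (esymm (Fin 10) ℂ 3) = auxP i 2 := pderiv_esymm' i 2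
  rw [map_add, pderiv_C_mul, pderiv_C_mul, pderiv_mul, h5, h2, h3]
  simp only [eval_add, eval_mul, eval_C]
  rw [hD4, hD1, hD2, hE2, hE3]
  rcases hx with h | h | h | h <;> rw [h] <;> ring
end
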